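/- Fix λ > 0, let z* = (w*, b*) be a local minimizer of (P_{0/1}), and let α* ∈ ℝ^m satisfy (KKT-PI) at z*. Set u* := (u_1(z*),…,u_m(z*)). If ρ > max_{i∈{1,…,m}} α*_i, then for every γ > 0 the point (z*, u*) is a local minimizer of the penalty problem (pen) with parameters ρ and γ. -/

import Mathlib

open scoped RealInnerProductSpace BigOperators

noncomputable section

/-- The 0/1 loss: `1` if `t > 0`, `0` otherwise. -/
def l01 (t : ℝ) : ℝ := if 0 < t then 1 else 0

/-- The ramp loss with parameter `γ`. -/
def ramp (γ t : ℝ) : ℝ := if γ < t then 1 else if 0 ≤ t then t else 0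

variable {n m : ℕ}

/-- The margin residual `u_i(z) = 1 - y_i (⟨w, x_i⟩ + b)` for `z = (w, b)`. -/
def uu (x : Fin m → EuclideanSpace ℝ (Fin n)) (y : Fin m → ℝ)
    (z : EuclideanSpace ℝ (Fin n) × ℝ) (i : Fin m) : ℝ :=
  1 - y i * (⟪z.1, x i⟫ + z.2)

/-- The 0/1-loss SVM objective `F_{0/1}`. -/
def F01 (x : Fin m → EuclideanSpace ℝ (Fin n)) (y : Fin m → ℝ) (lam : ℝ)
    (z : EuclideanSpace ℝ (Fin n) × ℝ) : ℝ :=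
  (1 / 2) * ‖z.1‖ ^ 2 + lam * ∑ i, l01 (uu x y z i)

/-- The hinge-loss SVM objective `F₁(z, c)`. -/
def F1 (x : Fin m → EuclideanSpace ℝ (Fin n)) (y : Fin m → ℝ)
    (c : EuclideanSpace ℝ (Fin m)) (z : EuclideanSpace ℝ (Fin n) × ℝ) : ℝ :=
  (1 / 2) * ‖z.1‖ ^ 2 + ∑ i, c i * max (uu x y z i) 0

/-- The dual quadratic objective `G(α) = (1/2)⟨α, Qα⟩ - Σ αᵢ`,
where `Q_{ij} = y_i y_j ⟨x_i, x_j⟩`. -/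
def Gfun (x : Fin m → EuclideanSpace ℝ (Fin n)) (y : Fin m → ℝ)
    (α : EuclideanSpace ℝ (Fin m)) : ℝ :=
  (1 / 2) * ∑ i, ∑ j, α i * (y i * y j * ⟪x i, x j⟫) * α j - ∑ i, α i

/-- The ℓ₀ "norm": the number of nonzero entries. -/
def norm0 (α : EuclideanSpace ℝ (Fin m)) : ℝ := (({i | α i ≠ 0} : Set (Fin m)).ncard : ℝ)

/-- Feasibility for the dual problem `(D_{0/1})`. -/
def DFeas (y : Fin m → ℝ) (α : EuclideanSpace ℝ (Fin m)) : Prop :=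
  (∀ i, 0 ≤ α i) ∧ ∑ i, y i * α i = 0

/-- `α*` is a local minimizer of the dual problem `(D_{0/1})` with parameter `μ`. -/
def DLocalMin (x : Fin m → EuclideanSpace ℝ (Fin n)) (y : Fin m → ℝ) (μ : ℝ)
    (αs : EuclideanSpace ℝ (Fin m)) : Prop :=
  DFeas y αs ∧ ∃ ε > 0, ∀ α : EuclideanSpace ℝ (Fin m), DFeas y α → dist α αs ≤ ε →
    Gfun x y αs + μ * norm0 αs ≤ Gfun x y α + μ * norm0 α

/-- The KKT system (KKT-T*) for `(D_I)` with `I = T* = {i : α*_i ≠ 0}`: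
`Qα* - 1 + u* + b* y = 0`; `α*_i ≥ 0`, `u*_i ≤ 0`, `α*_i u*_i = 0` on `T*`;
(`α*_i = 0` off `T*` holds by definition of `T*`); and `⟨y, α*⟩ = 0`. -/
def KKTT (x : Fin m → EuclideanSpace ℝ (Fin n)) (y : Fin m → ℝ)
    (αs us : EuclideanSpace ℝ (Fin m)) (bs : ℝ) : Prop :=
  (∀ i, (∑ j, (y i * y j * ⟪x i, x j⟫) * αs j) - 1 + us i + bs * y i = 0) ∧
  (∀ i, αs i ≠ 0 → 0 ≤ αs i ∧ us i ≤ 0 ∧ αs i * us i = 0) ∧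
  ∑ i, y i * αs i = 0

/-- The ramp-loss SVM objective of `(P_r)`. -/
def PrObj (x : Fin m → EuclideanSpace ℝ (Fin n)) (y : Fin m → ℝ) (ρ γ : ℝ)
    (z : EuclideanSpace ℝ (Fin n) × ℝ) : ℝ :=
  (1 / 2) * ‖z.1‖ ^ 2 + ρ * ∑ i, ramp γ (uu x y z i)

/-- The penalty objective of problem (pen). -/
def Pen (x : Fin m → EuclideanSpace ℝ (Fin n)) (y : Fin m → ℝ) (ρ γ : ℝ)
    (p : (EuclideanSpace ℝ (Fin n) × ℝ) × EuclideanSpace ℝ (Fin m)) : ℝ :=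
  (1 / 2) * ‖p.1.1‖ ^ 2 + ρ * ∑ i, |uu x y p.1 i - p.2 i| + ρ * γ * ∑ i, l01 (p.2 i)

/-- The smooth part `Φ(z, v)` of the penalty objective. -/
def Phi (x : Fin m → EuclideanSpace ℝ (Fin n)) (y : Fin m → ℝ) (ρ : ℝ)
    (p : (EuclideanSpace ℝ (Fin n) × ℝ) × EuclideanSpace ℝ (Fin m)) : ℝ :=
  (1 / 2) * ‖p.1.1‖ ^ 2 + ρ * ∑ i, |uu x y p.1 i - p.2 i|

/-- The KKT system (KKT-PI) for `(P_{0/1})` at `z*`. -/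
def KKTPI (x : Fin m → EuclideanSpace ℝ (Fin n)) (y : Fin m → ℝ)
    (zs : EuclideanSpace ℝ (Fin n) × ℝ) (αs : EuclideanSpace ℝ (Fin m)) : Prop :=
  zs.1 = ∑ i, (αs i * y i) • x i ∧
  (∀ i, uu x y zs i ≤ 0 → 0 ≤ αs i ∧ αs i * uu x y zs i = 0) ∧
  (∀ i, ¬ uu x y zs i ≤ 0 → αs i = 0) ∧
  ∑ i, y i * αs i = 0


lemma coord_le_dist {m : ℕ} (a b : EuclideanSpace ℝ (Fin m)) (i : Fin m) :
    |a i - b i| ≤ dist a b := by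
  rw [EuclideanSpace.dist_eq]
  have h1 : |a i - b i| = Real.sqrt (dist (a i) (b i) ^ 2) := by
    rw [Real.sqrt_sq_eq_abs, Real.dist_eq, abs_abs]
  rw [h1]
  apply Real.sqrt_le_sqrt
  exact Finset.single_le_sum (f := fun j => dist (a j) (b j) ^ 2)
    (fun j _ => sq_nonneg _) (Finset.mem_univ i)

/-- under (KKT-PI) at a local minimizer `z*` of `(P_{0/1})`, if
`ρ > max_i α*_i` then for every `γ > 0` the point `(z*, u*)` is a local minimizer of
the penalty problem (pen). -/
theorem stmt12 {n m : ℕ} (hn : 0 < n) (hm : 0 < m)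
    (x : Fin m → EuclideanSpace ℝ (Fin n)) (y : Fin m → ℝ)
    (hy : ∀ i, y i = 1 ∨ y i = -1)
    (lam : ℝ) (hlam : 0 < lam)
    (zs : EuclideanSpace ℝ (Fin n) × ℝ)
    (hloc : ∃ ε > 0, ∀ z : EuclideanSpace ℝ (Fin n) × ℝ,
      dist z zs ≤ ε → F01 x y lam zs ≤ F01 x y lam z)
    (αs : EuclideanSpace ℝ (Fin m)) (hkkt : KKTPI x y zs αs)
    (us : EuclideanSpace ℝ (Fin m)) (hus : ∀ i, us i = uu x y zs i)
    (ρ : ℝ) (hρ : ∀ i, αs i < ρ) :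
    ∀ γ : ℝ, 0 < γ →
      ∃ ε > 0, ∀ p : (EuclideanSpace ℝ (Fin n) × ℝ) × EuclideanSpace ℝ (Fin m),
        dist p (zs, us) ≤ ε → Pen x y ρ γ (zs, us) ≤ Pen x y ρ γ p := by
  intro γ hγ
  obtain ⟨hw, hI0, hIc, hsum⟩ := hkkt
  haveI : Nonempty (Fin m) := ⟨⟨0, hm⟩⟩
  -- ρ is positive
  have hρpos : 0 < ρ := by
    obtain ⟨i0⟩ := (inferInstance : Nonempty (Fin m))
    by_cases h : uu x y zs i0 ≤ 0
    · exact lt_of_le_of_lt (hI0 i0 h).1 (hρ i0)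
    · have h0 := hIc i0 h
      have := hρ i0
      linarith
  set ε : ℝ := min γ ((Finset.univ : Finset (Fin m)).inf' Finset.univ_nonempty
      fun i => if 0 < us i then us i / 2 else γ) with hεdef
  have hε : 0 < ε := by
    apply lt_min hγ
    rw [Finset.lt_inf'_iff]
    intro i _
    split_ifs with h
    · linarith
    · exact hγ
  have hεγ : ε ≤ γ := min_le_left _ _
  have hεi : ∀ i, 0 < us i → ε ≤ us i / 2 := by
    intro i hi
    refine le_trans (min_le_right _ _) ?_
    have := Finset.inf'_le (f := fun i => if 0 < us i then us i / 2 else γ)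
      (Finset.mem_univ i)
    exact le_of_le_of_eq this (by simp [hi])
  refine ⟨ε, hε, ?_⟩
  intro p hp
  have hv : ∀ i, |p.2 i - us i| ≤ ε := by
    intro i
    have hd : dist p.2 us ≤ dist p (zs, us) := by
      rw [Prod.dist_eq]; exact le_max_right _ _
    exact le_trans (coord_le_dist p.2 us i) (le_trans hd hp)
  -- pointwise key inequality
  have key : ∀ i ∈ (Finset.univ : Finset (Fin m)),
      ρ * γ * l01 (us i) ≤
      ρ * |uu x y p.1 i - p.2 i| + ρ * γ * l01 (p.2 i)
        + αs i * (uu x y zs i - uu x y p.1 i) := by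
    intro i _
    have habs := hv i
    by_cases h : uu x y zs i ≤ 0
    · -- u*_i ≤ 0 : l01 (us i) = 0
      obtain ⟨hα, hαu⟩ := hI0 i h
      have hus0 : us i ≤ 0 := by rw [hus]; exact h
      have hl0 : l01 (us i) = 0 := by simp [l01, not_lt.mpr hus0]
      rw [hl0, mul_zero]
      have hαρ : αs i ≤ ρ := (hρ i).le
      have h1 : αs i * (uu x y p.1 i - p.2 i) ≤ ρ * |uu x y p.1 i - p.2 i| := by
        have h1a : αs i * (uu x y p.1 i - p.2 i) ≤ αs i * |uu x y p.1 i - p.2 i| :=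
          mul_le_mul_of_nonneg_left (le_abs_self _) hα
        exact le_trans h1a (mul_le_mul_of_nonneg_right hαρ (abs_nonneg _))
      have h2 : αs i * (uu x y zs i - uu x y p.1 i)
          = -(αs i * (uu x y p.1 i - p.2 i)) - αs i * p.2 i := by
        linear_combination hαu
      by_cases hvpos : 0 < p.2 i
      · have hl1 : l01 (p.2 i) = 1 := by simp [l01, hvpos]
        rw [hl1, mul_one]
        -- p.2 i ≤ γ
        have hvγ : p.2 i ≤ γ := by
          have : p.2 i - us i ≤ ε := le_trans (le_abs_self _) habs
          linarith [hεγ]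
        have h3 : αs i * p.2 i ≤ ρ * γ := by
          have t1 : αs i * p.2 i ≤ αs i * γ := mul_le_mul_of_nonneg_left hvγ hα
          have t2 : αs i * γ ≤ ρ * γ := mul_le_mul_of_nonneg_right hαρ hγ.le
          linarith
        linarith
      · have hl1 : l01 (p.2 i) = 0 := by simp [l01, hvpos]
        rw [hl1, mul_zero]
        have h3 : 0 ≤ -(αs i * p.2 i) := by
          have : p.2 i ≤ 0 := not_lt.mp hvpos
          nlinarith
        linarith
    · -- u*_i > 0 : αs i = 0 and p.2 i > 0
      have hα0 := hIc i h
      push_neg at h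
      have husp : 0 < us i := by rw [hus]; exact h
      have hvpos : 0 < p.2 i := by
        have h1 : us i - p.2 i ≤ ε := by
          have := habs; rw [abs_sub_comm] at this
          exact le_trans (le_abs_self _) this
        have := hεi i husp
        linarith
      have hl1 : l01 (us i) = 1 := by simp [l01, husp]
      have hl2 : l01 (p.2 i) = 1 := by simp [l01, hvpos]
      rw [hl1, hl2, hα0]
      have : 0 ≤ ρ * |uu x y p.1 i - p.2 i| := by positivity
      linarith
  -- inner product identity
  have hinner : ∑ i, αs i * (uu x y zs i - uu x y p.1 i) = ⟪zs.1, p.1.1 - zs.1⟫ := by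
    have hin : ⟪zs.1, p.1.1 - zs.1⟫
        = ∑ i, (αs i * y i) * (⟪p.1.1, x i⟫ - ⟪zs.1, x i⟫) := by
      conv_lhs => rw [hw]
      rw [sum_inner]
      refine Finset.sum_congr rfl fun i _ => ?_
      rw [real_inner_smul_left, inner_sub_right,
        real_inner_comm (x i) p.1.1, real_inner_comm (x i) zs.1, ← hw]
    rw [hin]
    have hterm : ∀ i, αs i * (uu x y zs i - uu x y p.1 i)
        = (αs i * y i) * (⟪p.1.1, x i⟫ - ⟪zs.1, x i⟫) + (y i * αs i) * (p.1.2 - zs.2) := by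
      intro i; simp only [uu]; ring
    rw [Finset.sum_congr rfl fun i _ => hterm i, Finset.sum_add_distrib]
    have : ∑ i, (y i * αs i) * (p.1.2 - zs.2) = (∑ i, y i * αs i) * (p.1.2 - zs.2) :=
      (Finset.sum_mul _ _ _).symm
    rw [this, hsum, zero_mul, add_zero]
  -- convexity of the quadratic
  have hnorm : (1/2 : ℝ) * ‖zs.1‖ ^ 2 + ⟪zs.1, p.1.1 - zs.1⟫ ≤ (1/2) * ‖p.1.1‖ ^ 2 := by
    have hsplit : zs.1 + (p.1.1 - zs.1) = p.1.1 := by abel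
    have h := norm_add_sq_real zs.1 (p.1.1 - zs.1)
    rw [hsplit] at h
    nlinarith [sq_nonneg ‖p.1.1 - zs.1‖]
  -- put it together
  have hPenzs : Pen x y ρ γ (zs, us)
      = (1/2) * ‖zs.1‖ ^ 2 + ρ * γ * ∑ i, l01 (us i) := by
    simp only [Pen]
    have h1 : ∀ i, uu x y (zs, us).1 i - us i = 0 := by
      intro i; rw [hus]; simp [uu]
    simp only [h1, abs_zero, Finset.sum_const_zero, mul_zero, add_zero]
  have hsumle := Finset.sum_le_sum key
  rw [Finset.sum_add_distrib, Finset.sum_add_distrib, hinner,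
    ← Finset.mul_sum, ← Finset.mul_sum, ← Finset.mul_sum] at hsumle
  have hPenp : Pen x y ρ γ p
      = (1/2) * ‖p.1.1‖ ^ 2 + (ρ * ∑ i, |uu x y p.1 i - p.2 i| + ρ * γ * ∑ i, l01 (p.2 i)) := by
    simp only [Pen]; ring
  rw [hPenzs, hPenp]
  linarith

end
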